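/- Let n ≥ 1, x₀ ∈ ℝⁿ, λ ∈ ℝ, and let u be a real-valued C² function on ℝⁿ. Set φ(x) := ½|x − x₀|² and v := e^{λφ} u. Define the vector field F on ℝⁿ with components F^j := 2λ (x_j − x₀ⱼ) |∇v|² − 4λ ((x − x₀)·∇v) v_j − 2λ n v_j v − 2λ³ |x − x₀|² (x_j − x₀ⱼ) v² + 2λ² n (x_j − x₀ⱼ) v². Then at every point x ∈ ℝⁿ: e^{2λφ(x)} |Δu(x)|² ≥ 4λ |∇v(x)|² + 4λ³ |x − x₀|² v(x)² − 2λ² n² v(x)² + ∑_{j=1}^n ∂_j F^j(x). In particular, if λ ≥ n², then at every point x with |x − x₀| ≥ 1: e^{2λφ(x)} |Δu(x)|² ≥ 4λ |∇v(x)|² + 2λ³ v(x)² + ∑_{j=1}^n ∂_j F^j(x). -/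

import Mathlib

/-- Partial derivative `∂_j` of a real-valued function on `ℝⁿ`. -/
noncomputable def pd {n : ℕ} (j : Fin n) (w : (Fin n → ℝ) → ℝ) : (Fin n → ℝ) → ℝ :=
  fun x => fderiv ℝ w x (Pi.single j 1)

/-- The quadratic phase `φ(x) := ½|x − x₀|²`. -/
noncomputable def phi {n : ℕ} (x₀ : Fin n → ℝ) : (Fin n → ℝ) → ℝ :=
  fun x => (1 / 2 : ℝ) * ∑ j, (x j - x₀ j) ^ 2

/-- The conjugated function `v := e^{λφ} u`. -/
noncomputable def conjV {n : ℕ} (x₀ : Fin n → ℝ) (lam : ℝ) (u : (Fin n → ℝ) → ℝ) :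
    (Fin n → ℝ) → ℝ :=
  fun x => Real.exp (lam * phi x₀ x) * u x

/-- The vector field `F^j` of the elliptic pointwise Carleman estimate:
`F^j := 2λ(x_j − x₀ⱼ)|∇v|² − 4λ((x−x₀)·∇v)v_j − 2λn v_j v
        − 2λ³|x−x₀|²(x_j − x₀ⱼ)v² + 2λ²n(x_j − x₀ⱼ)v²`, with `v := e^{λφ}u`. -/
noncomputable def ellF {n : ℕ} (x₀ : Fin n → ℝ) (lam : ℝ) (u : (Fin n → ℝ) → ℝ)
    (j : Fin n) : (Fin n → ℝ) → ℝ :=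
  fun x =>
    2 * lam * (x j - x₀ j) * (∑ k, (pd k (conjV x₀ lam u) x) ^ 2)
      - 4 * lam * (∑ k, (x k - x₀ k) * pd k (conjV x₀ lam u) x)
          * pd j (conjV x₀ lam u) x
      - 2 * lam * (n : ℝ) * pd j (conjV x₀ lam u) x * conjV x₀ lam u x
      - 2 * lam ^ 3 * (∑ k, (x k - x₀ k) ^ 2) * (x j - x₀ j)
          * (conjV x₀ lam u x) ^ 2
      + 2 * lam ^ 2 * (n : ℝ) * (x j - x₀ j) * (conjV x₀ lam u x) ^ 2

section PDCalc
variable {n : ℕ} {f g : (Fin n → ℝ) → ℝ} {x : Fin n → ℝ} {j : Fin n}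

lemma pd_add (hf : DifferentiableAt ℝ f x) (hg : DifferentiableAt ℝ g x) :
    pd j (fun y => f y + g y) x = pd j f x + pd j g x := by
  simp [pd, fderiv_fun_add hf hg]

lemma pd_sub (hf : DifferentiableAt ℝ f x) (hg : DifferentiableAt ℝ g x) :
    pd j (fun y => f y - g y) x = pd j f x - pd j g x := by
  simp [pd, fderiv_fun_sub hf hg]

lemma pd_mul (hf : DifferentiableAt ℝ f x) (hg : DifferentiableAt ℝ g x) :
    pd j (fun y => f y * g y) x = f x * pd j g x + g x * pd j f x := by
  simp [pd, fderiv_fun_mul hf hg]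

lemma pd_const (c : ℝ) : pd j (fun _ => c) x = 0 := by
  simp [pd]

lemma pd_const_mul (c : ℝ) (hf : DifferentiableAt ℝ f x) :
    pd j (fun y => c * f y) x = c * pd j f x := by
  simp [pd, fderiv_const_mul hf]

lemma pd_sum {ι : Type*} (s : Finset ι) (F : ι → (Fin n → ℝ) → ℝ)
    (h : ∀ i ∈ s, DifferentiableAt ℝ (F i) x) :
    pd j (fun y => ∑ i ∈ s, F i y) x = ∑ i ∈ s, pd j (F i) x := by
  simp [pd, fderiv_fun_sum h]

lemma pd_coord (k : Fin n) : pd j (fun y : Fin n → ℝ => y k) x = if k = j then 1 else 0 := by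
  have h : (fun y : Fin n → ℝ => y k) = (ContinuousLinearMap.proj k : (Fin n → ℝ) →L[ℝ] ℝ) := rfl
  rw [pd, h, ContinuousLinearMap.fderiv]
  simp [Pi.single_apply]

lemma pd_exp (hf : DifferentiableAt ℝ f x) :
    pd j (fun y => Real.exp (f y)) x = Real.exp (f x) * pd j f x := by
  simp [pd, fderiv_exp hf]

lemma pd_sq (hf : DifferentiableAt ℝ f x) :
    pd j (fun y => f y ^ 2) x = 2 * f x * pd j f x := by
  have h : (fun y => f y ^ 2) = fun y => f y * f y := by ext y; ring
  rw [h, pd_mul hf hf]; ring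

lemma differentiable_coord (k : Fin n) : Differentiable ℝ (fun y : Fin n → ℝ => y k) :=
  (ContinuousLinearMap.proj k : (Fin n → ℝ) →L[ℝ] ℝ).differentiable

lemma contDiff_coord (k : Fin n) {m : WithTop ℕ∞} : ContDiff ℝ m (fun y : Fin n → ℝ => y k) :=
  (ContinuousLinearMap.proj k : (Fin n → ℝ) →L[ℝ] ℝ).contDiff

lemma contDiff_pd (hf : ContDiff ℝ 2 f) (k : Fin n) : ContDiff ℝ 1 (pd k f) := by
  have h2 : pd k f
      = ⇑(ContinuousLinearMap.apply ℝ ℝ (Pi.single k 1)) ∘ fderiv ℝ f := rfl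
  rw [h2]
  exact ((ContinuousLinearMap.apply ℝ ℝ (Pi.single k 1)).contDiff).comp
    (hf.fderiv_right (m := 1) (by norm_num))

lemma pd_pd_symm (hf : ContDiff ℝ 2 f) (j k : Fin n) (x : Fin n → ℝ) :
    pd j (pd k f) x = pd k (pd j f) x := by
  have hd : DifferentiableAt ℝ (fderiv ℝ f) x :=
    (hf.fderiv_right (m := 1) (by norm_num)).differentiable one_ne_zero x
  have hrw : ∀ a b : Fin n,
      pd a (pd b f) x = fderiv ℝ (fderiv ℝ f) x (Pi.single a 1) (Pi.single b 1) := by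
    intro a b
    have h : pd a (pd b f) x
        = fderiv ℝ (fun y => fderiv ℝ f y (Pi.single b 1)) x (Pi.single a 1) := rfl
    rw [h, fderiv_clm_apply hd (differentiableAt_const _)]
    simp
  rw [hrw j k, hrw k j]
  exact (hf.contDiffAt.isSymmSndFDerivAt (by norm_num)) _ _

end PDCalc

section Formulas
variable {n : ℕ} (x₀ : Fin n → ℝ) (lam : ℝ) {u : (Fin n → ℝ) → ℝ}

lemma contDiff_phi {m : WithTop ℕ∞} : ContDiff ℝ m (phi x₀) := by
  unfold phi
  exact contDiff_const.mul (ContDiff.sum fun k _ =>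
    ((contDiff_coord k).sub contDiff_const).pow 2)

lemma contDiff_E {m : WithTop ℕ∞} :
    ContDiff ℝ m (fun x => Real.exp (lam * phi x₀ x)) :=
  (Real.contDiff_exp.of_le le_top).comp (contDiff_const.mul (contDiff_phi x₀))

lemma contDiff_conjV {m : WithTop ℕ∞} (hu : ContDiff ℝ m u) :
    ContDiff ℝ m (conjV x₀ lam u) :=
  (contDiff_E x₀ lam).mul hu

lemma diffAt_coord_sub (k : Fin n) (x : Fin n → ℝ) :
    DifferentiableAt ℝ (fun y : Fin n → ℝ => y k - x₀ k) x :=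
  ((contDiff_coord k (m := 1)).differentiable one_ne_zero x).sub_const _

lemma pd_coord_sub (j k : Fin n) (x : Fin n → ℝ) :
    pd j (fun y : Fin n → ℝ => y k - x₀ k) x = if k = j then 1 else 0 := by
  rw [pd_sub ((contDiff_coord k (m := 1)).differentiable one_ne_zero x) (differentiableAt_const _),
    pd_coord, pd_const, sub_zero]

lemma pd_phi (j : Fin n) (x : Fin n → ℝ) : pd j (phi x₀) x = x j - x₀ j := by
  have h : phi x₀ = fun y => (1/2 : ℝ) * ∑ k, (y k - x₀ k)^2 := rfl
  rw [h, pd_const_mul _ (by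
    exact DifferentiableAt.fun_sum fun k _ => ((diffAt_coord_sub x₀ k x).pow 2)),
    pd_sum _ _ (fun k _ => (diffAt_coord_sub x₀ k x).fun_pow 2)]
  have h2 : ∀ k : Fin n, pd j (fun y => (y k - x₀ k)^2) x
      = 2 * (x k - x₀ k) * (if k = j then 1 else 0) := by
    intro k
    rw [pd_sq (diffAt_coord_sub x₀ k x), pd_coord_sub]
  rw [Finset.sum_congr rfl fun k _ => h2 k]
  simp [Finset.sum_ite_eq', mul_ite]

lemma pd_E (j : Fin n) (x : Fin n → ℝ) :
    pd j (fun y => Real.exp (lam * phi x₀ y)) x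
      = lam * (x j - x₀ j) * Real.exp (lam * phi x₀ x) := by
  rw [pd_exp (by
      exact (differentiableAt_const lam).mul
        ((contDiff_phi x₀ (m := 1)).differentiable one_ne_zero x)),
    pd_const_mul _ ((contDiff_phi x₀ (m := 1)).differentiable one_ne_zero x), pd_phi]
  ring

lemma pd_conjV (hu : ContDiff ℝ 2 u) (k : Fin n) (x : Fin n → ℝ) :
    pd k (conjV x₀ lam u) x
      = lam * (x k - x₀ k) * conjV x₀ lam u x
        + Real.exp (lam * phi x₀ x) * pd k u x := by
  have hE : DifferentiableAt ℝ (fun y => Real.exp (lam * phi x₀ y)) x :=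
    (contDiff_E x₀ lam (m := 1)).differentiable one_ne_zero x
  have hud : DifferentiableAt ℝ u x := hu.differentiable (by norm_num) x
  have h : conjV x₀ lam u = fun y => Real.exp (lam * phi x₀ y) * u y := rfl
  rw [h, pd_mul hE hud, pd_E]
  show _ = lam * (x k - x₀ k) * (Real.exp (lam * phi x₀ x) * u x) + _
  ring

lemma pd_pd_conjV (hu : ContDiff ℝ 2 u) (j : Fin n) (x : Fin n → ℝ) :
    pd j (pd j (conjV x₀ lam u)) x
      = Real.exp (lam * phi x₀ x) * pd j (pd j u) x
        + 2 * lam * ((x j - x₀ j) * pd j (conjV x₀ lam u) x)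
        + lam * conjV x₀ lam u x
        - lam ^ 2 * conjV x₀ lam u x * (x j - x₀ j) ^ 2 := by
  set V := conjV x₀ lam u with hV
  have hVd : DifferentiableAt ℝ V x := (contDiff_conjV x₀ lam hu).differentiable (by norm_num) x
  have hEd : DifferentiableAt ℝ (fun y => Real.exp (lam * phi x₀ y)) x :=
    (contDiff_E x₀ lam (m := 1)).differentiable one_ne_zero x
  have hujd : DifferentiableAt ℝ (pd j u) x :=
    (contDiff_pd hu j).differentiable one_ne_zero x
  have d1 : DifferentiableAt ℝ (fun y : Fin n → ℝ => (y j - x₀ j) * V y) x :=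
    (diffAt_coord_sub x₀ j x).mul hVd
  have d2 : DifferentiableAt ℝ (fun y : Fin n → ℝ => lam * ((y j - x₀ j) * V y)) x :=
    d1.const_mul lam
  have d3 : DifferentiableAt ℝ (fun y => Real.exp (lam * phi x₀ y) * pd j u y) x :=
    hEd.mul hujd
  have hfun : pd j V = fun y =>
      lam * ((y j - x₀ j) * V y) + Real.exp (lam * phi x₀ y) * pd j u y := by
    funext y
    rw [pd_conjV x₀ lam hu j y]; ring
  have step1 : pd j (pd j V) x
      = lam * ((x j - x₀ j) * pd j V x + V x * (if j = j then 1 else 0))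
        + (Real.exp (lam * phi x₀ x) * pd j (pd j u) x
            + pd j u x * (lam * (x j - x₀ j) * Real.exp (lam * phi x₀ x))) := by
    conv_lhs => rw [hfun]
    rw [pd_add d2 d3, pd_const_mul _ d1, pd_mul (diffAt_coord_sub x₀ j x) hVd,
      pd_coord_sub, pd_mul hEd hujd, pd_E]
  have hEu : pd j u x * (lam * (x j - x₀ j) * Real.exp (lam * phi x₀ x))
      = lam * (x j - x₀ j) * (pd j V x - lam * (x j - x₀ j) * V x) := by
    have h0 := pd_conjV x₀ lam hu j x
    rw [← hV] at h0
    have h2 : Real.exp (lam * phi x₀ x) * pd j u x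
        = pd j V x - lam * (x j - x₀ j) * V x := by linarith
    calc pd j u x * (lam * (x j - x₀ j) * Real.exp (lam * phi x₀ x))
        = lam * (x j - x₀ j) * (Real.exp (lam * phi x₀ x) * pd j u x) := by ring
      _ = lam * (x j - x₀ j) * (pd j V x - lam * (x j - x₀ j) * V x) := by rw [h2]
  have hif : (if j = j then (1:ℝ) else 0) = 1 := if_pos rfl
  rw [step1, hEu, hif]
  ring

lemma lap_conjV (hu : ContDiff ℝ 2 u) (x : Fin n → ℝ) :
    Real.exp (lam * phi x₀ x) * (∑ j, pd j (pd j u) x)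
      = (∑ j, pd j (pd j (conjV x₀ lam u)) x)
        - 2 * lam * (∑ k, (x k - x₀ k) * pd k (conjV x₀ lam u) x)
        + (lam ^ 2 * (∑ k, (x k - x₀ k) ^ 2) - lam * n) * conjV x₀ lam u x := by
  have hsum : ∑ j, pd j (pd j (conjV x₀ lam u)) x
      = ∑ j, (Real.exp (lam * phi x₀ x) * pd j (pd j u) x
        + 2 * lam * ((x j - x₀ j) * pd j (conjV x₀ lam u) x)
        + lam * conjV x₀ lam u x
        - lam ^ 2 * conjV x₀ lam u x * (x j - x₀ j) ^ 2) :=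
    Finset.sum_congr rfl fun j _ => pd_pd_conjV x₀ lam hu j x
  rw [hsum]
  simp only [Finset.sum_add_distrib, Finset.sum_sub_distrib, ← Finset.mul_sum,
    Finset.sum_const, Finset.card_univ, Fintype.card_fin, nsmul_eq_mul]
  ring

end Formulas

section Div
variable (x₀ : Fin n → ℝ) (lam : ℝ) {u : (Fin n → ℝ) → ℝ}

lemma pd_ellF (hu : ContDiff ℝ 2 u) (j : Fin n) (x : Fin n → ℝ) :
    pd j (ellF x₀ lam u j) x =
      2 * lam * (∑ k, (pd k (conjV x₀ lam u) x) ^ 2)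
      + 4 * lam * ((x j - x₀ j) * (∑ k, pd k (conjV x₀ lam u) x * pd j (pd k (conjV x₀ lam u)) x))
      - 4 * lam * (pd j (conjV x₀ lam u) x * (∑ k, (x k - x₀ k) * pd j (pd k (conjV x₀ lam u)) x))
      - 4 * lam * (pd j (conjV x₀ lam u) x) ^ 2
      - 4 * lam * ((∑ k, (x k - x₀ k) * pd k (conjV x₀ lam u) x) * pd j (pd j (conjV x₀ lam u)) x)
      - 2 * lam * (n : ℝ) * (conjV x₀ lam u x * pd j (pd j (conjV x₀ lam u)) x)
      - 2 * lam * (n : ℝ) * (pd j (conjV x₀ lam u) x) ^ 2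
      - 4 * lam ^ 3 * ((conjV x₀ lam u x) ^ 2 * (x j - x₀ j) ^ 2)
      - 2 * lam ^ 3 * ((∑ k, (x k - x₀ k) ^ 2) * (conjV x₀ lam u x) ^ 2)
      - 4 * lam ^ 3 * ((∑ k, (x k - x₀ k) ^ 2) * (conjV x₀ lam u x * ((x j - x₀ j) * pd j (conjV x₀ lam u) x)))
      + 2 * lam ^ 2 * (n : ℝ) * (conjV x₀ lam u x) ^ 2
      + 4 * lam ^ 2 * (n : ℝ) * (conjV x₀ lam u x * ((x j - x₀ j) * pd j (conjV x₀ lam u) x)) := by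
  have hV2 : ContDiff ℝ 2 (conjV x₀ lam u) := contDiff_conjV x₀ lam hu
  have dV : Differentiable ℝ (conjV x₀ lam u) := hV2.differentiable (by norm_num)
  have dvk : ∀ k : Fin n, Differentiable ℝ (pd k (conjV x₀ lam u)) :=
    fun k => (contDiff_pd hV2 k).differentiable one_ne_zero
  have dcs : ∀ k : Fin n, Differentiable ℝ (fun y : Fin n → ℝ => y k - x₀ k) :=
    fun k y => diffAt_coord_sub x₀ k y
  have dG : Differentiable ℝ (fun y => ∑ k, (pd k (conjV x₀ lam u) y) ^ 2) :=
    Differentiable.fun_sum fun k _ => (dvk k).pow 2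
  have dS : Differentiable ℝ (fun y => ∑ k, (y k - x₀ k) * pd k (conjV x₀ lam u) y) :=
    Differentiable.fun_sum fun k _ => (dcs k).mul (dvk k)
  have dR : Differentiable ℝ (fun y : Fin n → ℝ => ∑ k, (y k - x₀ k) ^ 2) :=
    Differentiable.fun_sum fun k _ => (dcs k).pow 2
  have dA : Differentiable ℝ
      (fun y => 2 * lam * (y j - x₀ j) * (∑ k, (pd k (conjV x₀ lam u) y) ^ 2)) :=
    (((dcs j).const_mul (2 * lam)).mul dG)
  have dB : Differentiable ℝ
      (fun y => 4 * lam * (∑ k, (y k - x₀ k) * pd k (conjV x₀ lam u) y)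
        * pd j (conjV x₀ lam u) y) :=
    ((dS.const_mul (4 * lam)).mul (dvk j))
  have dC : Differentiable ℝ
      (fun y => 2 * lam * (n : ℝ) * pd j (conjV x₀ lam u) y * conjV x₀ lam u y) :=
    (((dvk j).const_mul (2 * lam * (n : ℝ))).mul dV)
  have dD : Differentiable ℝ
      (fun y => 2 * lam ^ 3 * (∑ k, (y k - x₀ k) ^ 2) * (y j - x₀ j)
        * (conjV x₀ lam u y) ^ 2) :=
    (((dR.const_mul (2 * lam ^ 3)).mul (dcs j)).mul (dV.pow 2))
  have dE : Differentiable ℝ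
      (fun y => 2 * lam ^ 2 * (n : ℝ) * (y j - x₀ j) * (conjV x₀ lam u y) ^ 2) :=
    (((dcs j).const_mul (2 * lam ^ 2 * (n : ℝ))).mul (dV.pow 2))
  -- derivative of the gradient-square sum
  have hG : pd j (fun y => ∑ k, (pd k (conjV x₀ lam u) y) ^ 2) x
      = 2 * ∑ k, pd k (conjV x₀ lam u) x * pd j (pd k (conjV x₀ lam u)) x := by
    rw [pd_sum _ _ (fun k _ => ((dvk k) x).fun_pow 2)]
    rw [Finset.sum_congr rfl (fun k _ => pd_sq ((dvk k) x))]
    rw [Finset.mul_sum]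
    exact Finset.sum_congr rfl fun k _ => by ring
  -- derivative of the S sum
  have hS : pd j (fun y => ∑ k, (y k - x₀ k) * pd k (conjV x₀ lam u) y) x
      = pd j (conjV x₀ lam u) x
        + ∑ k, (x k - x₀ k) * pd j (pd k (conjV x₀ lam u)) x := by
    rw [pd_sum _ _ (fun k _ => ((dcs k) x).fun_mul ((dvk k) x))]
    have h1 : ∀ k : Fin n, pd j (fun y => (y k - x₀ k) * pd k (conjV x₀ lam u) y) x
        = (x k - x₀ k) * pd j (pd k (conjV x₀ lam u)) x
          + (if k = j then pd k (conjV x₀ lam u) x else 0) := by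
      intro k
      rw [pd_mul ((dcs k) x) ((dvk k) x), pd_coord_sub]
      by_cases h : k = j <;> simp [h]
    rw [Finset.sum_congr rfl fun k _ => h1 k, Finset.sum_add_distrib,
      Finset.sum_ite_eq' Finset.univ j (fun k => pd k (conjV x₀ lam u) x)]
    simp [add_comm]
  -- derivative of the R sum
  have hR : pd j (fun y : Fin n → ℝ => ∑ k, (y k - x₀ k) ^ 2) x = 2 * (x j - x₀ j) := by
    rw [pd_sum _ _ (fun k _ => ((dcs k) x).fun_pow 2)]
    have h1 : ∀ k : Fin n, pd j (fun y : Fin n → ℝ => (y k - x₀ k) ^ 2) x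
        = if k = j then 2 * (x k - x₀ k) else 0 := by
      intro k
      rw [pd_sq ((dcs k) x), pd_coord_sub]
      by_cases h : k = j <;> simp [h]
    rw [Finset.sum_congr rfl fun k _ => h1 k,
      Finset.sum_ite_eq' Finset.univ j (fun k => 2 * (x k - x₀ k))]
    simp
  -- split ellF into five pieces
  have e0 : pd j (ellF x₀ lam u j) x
      = pd j (fun y => 2 * lam * (y j - x₀ j) * (∑ k, (pd k (conjV x₀ lam u) y) ^ 2)
          - 4 * lam * (∑ k, (y k - x₀ k) * pd k (conjV x₀ lam u) y) * pd j (conjV x₀ lam u) y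
          - 2 * lam * (n : ℝ) * pd j (conjV x₀ lam u) y * conjV x₀ lam u y
          - 2 * lam ^ 3 * (∑ k, (y k - x₀ k) ^ 2) * (y j - x₀ j) * (conjV x₀ lam u y) ^ 2) x
        + pd j (fun y => 2 * lam ^ 2 * (n : ℝ) * (y j - x₀ j) * (conjV x₀ lam u y) ^ 2) x :=
    pd_add ((((dA.sub dB).sub dC).sub dD) x) (dE x)
  have e1 : pd j (fun y => 2 * lam * (y j - x₀ j) * (∑ k, (pd k (conjV x₀ lam u) y) ^ 2)
          - 4 * lam * (∑ k, (y k - x₀ k) * pd k (conjV x₀ lam u) y) * pd j (conjV x₀ lam u) y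
          - 2 * lam * (n : ℝ) * pd j (conjV x₀ lam u) y * conjV x₀ lam u y
          - 2 * lam ^ 3 * (∑ k, (y k - x₀ k) ^ 2) * (y j - x₀ j) * (conjV x₀ lam u y) ^ 2) x
      = pd j (fun y => 2 * lam * (y j - x₀ j) * (∑ k, (pd k (conjV x₀ lam u) y) ^ 2)
          - 4 * lam * (∑ k, (y k - x₀ k) * pd k (conjV x₀ lam u) y) * pd j (conjV x₀ lam u) y
          - 2 * lam * (n : ℝ) * pd j (conjV x₀ lam u) y * conjV x₀ lam u y) x
        - pd j (fun y => 2 * lam ^ 3 * (∑ k, (y k - x₀ k) ^ 2) * (y j - x₀ j)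
            * (conjV x₀ lam u y) ^ 2) x :=
    pd_sub (((dA.sub dB).sub dC) x) (dD x)
  have e2 : pd j (fun y => 2 * lam * (y j - x₀ j) * (∑ k, (pd k (conjV x₀ lam u) y) ^ 2)
          - 4 * lam * (∑ k, (y k - x₀ k) * pd k (conjV x₀ lam u) y) * pd j (conjV x₀ lam u) y
          - 2 * lam * (n : ℝ) * pd j (conjV x₀ lam u) y * conjV x₀ lam u y) x
      = pd j (fun y => 2 * lam * (y j - x₀ j) * (∑ k, (pd k (conjV x₀ lam u) y) ^ 2)
          - 4 * lam * (∑ k, (y k - x₀ k) * pd k (conjV x₀ lam u) y) * pd j (conjV x₀ lam u) y) x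
        - pd j (fun y => 2 * lam * (n : ℝ) * pd j (conjV x₀ lam u) y * conjV x₀ lam u y) x :=
    pd_sub ((dA.sub dB) x) (dC x)
  have e3 : pd j (fun y => 2 * lam * (y j - x₀ j) * (∑ k, (pd k (conjV x₀ lam u) y) ^ 2)
          - 4 * lam * (∑ k, (y k - x₀ k) * pd k (conjV x₀ lam u) y) * pd j (conjV x₀ lam u) y) x
      = pd j (fun y => 2 * lam * (y j - x₀ j) * (∑ k, (pd k (conjV x₀ lam u) y) ^ 2)) x
        - pd j (fun y => 4 * lam * (∑ k, (y k - x₀ k) * pd k (conjV x₀ lam u) y)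
            * pd j (conjV x₀ lam u) y) x :=
    pd_sub (dA x) (dB x)
  -- term A
  have eA : pd j (fun y => 2 * lam * (y j - x₀ j) * (∑ k, (pd k (conjV x₀ lam u) y) ^ 2)) x
      = (2 * lam * (x j - x₀ j)) * (2 * ∑ k, pd k (conjV x₀ lam u) x * pd j (pd k (conjV x₀ lam u)) x)
        + (∑ k, (pd k (conjV x₀ lam u) x) ^ 2) * (2 * lam) := by
    rw [pd_mul (((dcs j).const_mul (2 * lam)) x) (dG x), hG,
      pd_const_mul _ ((dcs j) x), pd_coord_sub]
    simp
  -- term B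
  have eB : pd j (fun y => 4 * lam * (∑ k, (y k - x₀ k) * pd k (conjV x₀ lam u) y)
        * pd j (conjV x₀ lam u) y) x
      = (4 * lam * (∑ k, (x k - x₀ k) * pd k (conjV x₀ lam u) x)) * pd j (pd j (conjV x₀ lam u)) x
        + pd j (conjV x₀ lam u) x * (4 * lam * (pd j (conjV x₀ lam u) x
            + ∑ k, (x k - x₀ k) * pd j (pd k (conjV x₀ lam u)) x)) := by
    rw [pd_mul ((dS.const_mul (4 * lam)) x) ((dvk j) x), pd_const_mul _ (dS x), hS]
  -- term C
  have eC : pd j (fun y => 2 * lam * (n : ℝ) * pd j (conjV x₀ lam u) y * conjV x₀ lam u y) x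
      = (2 * lam * (n : ℝ) * pd j (conjV x₀ lam u) x) * pd j (conjV x₀ lam u) x
        + conjV x₀ lam u x * (2 * lam * (n : ℝ) * pd j (pd j (conjV x₀ lam u)) x) := by
    rw [pd_mul (((dvk j).const_mul (2 * lam * (n : ℝ))) x) (dV x),
      pd_const_mul _ ((dvk j) x)]
  -- term D
  have eD : pd j (fun y => 2 * lam ^ 3 * (∑ k, (y k - x₀ k) ^ 2) * (y j - x₀ j)
        * (conjV x₀ lam u y) ^ 2) x
      = (2 * lam ^ 3 * (∑ k, (x k - x₀ k) ^ 2) * (x j - x₀ j))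
          * (2 * conjV x₀ lam u x * pd j (conjV x₀ lam u) x)
        + (conjV x₀ lam u x) ^ 2
          * ((2 * lam ^ 3 * (∑ k, (x k - x₀ k) ^ 2)) * 1
            + (x j - x₀ j) * (2 * lam ^ 3 * (2 * (x j - x₀ j)))) := by
    rw [pd_mul (((dR.const_mul (2 * lam ^ 3)).fun_mul (dcs j)) x) ((dV.fun_pow 2) x),
      pd_sq (dV x),
      pd_mul ((dR.const_mul (2 * lam ^ 3)) x) ((dcs j) x), pd_coord_sub,
      pd_const_mul _ (dR x), hR]
    simp
  -- term E
  have eE : pd j (fun y => 2 * lam ^ 2 * (n : ℝ) * (y j - x₀ j) * (conjV x₀ lam u y) ^ 2) x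
      = (2 * lam ^ 2 * (n : ℝ) * (x j - x₀ j)) * (2 * conjV x₀ lam u x * pd j (conjV x₀ lam u) x)
        + (conjV x₀ lam u x) ^ 2 * (2 * lam ^ 2 * (n : ℝ)) := by
    rw [pd_mul (((dcs j).const_mul (2 * lam ^ 2 * (n : ℝ))) x) ((dV.fun_pow 2) x),
      pd_sq (dV x), pd_const_mul _ ((dcs j) x), pd_coord_sub]
    simp
  rw [e0, e1, e2, e3, eA, eB, eC, eD, eE]
  ring

lemma sum_pd_ellF (hu : ContDiff ℝ 2 u) (x : Fin n → ℝ) :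
    (∑ j, pd j (ellF x₀ lam u j) x)
      = - 4 * lam * (∑ k, (pd k (conjV x₀ lam u) x) ^ 2)
        - 4 * lam * (∑ k, (x k - x₀ k) * pd k (conjV x₀ lam u) x)
            * (∑ j, pd j (pd j (conjV x₀ lam u)) x)
        - 2 * lam * (n : ℝ) * conjV x₀ lam u x * (∑ j, pd j (pd j (conjV x₀ lam u)) x)
        - 2 * lam ^ 3 * ((n : ℝ) + 2) * (∑ k, (x k - x₀ k) ^ 2) * (conjV x₀ lam u x) ^ 2
        - 4 * lam ^ 3 * (∑ k, (x k - x₀ k) ^ 2) * conjV x₀ lam u x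
            * (∑ k, (x k - x₀ k) * pd k (conjV x₀ lam u) x)
        + 4 * lam ^ 2 * (n : ℝ) * conjV x₀ lam u x
            * (∑ k, (x k - x₀ k) * pd k (conjV x₀ lam u) x)
        + 2 * lam ^ 2 * (n : ℝ) ^ 2 * (conjV x₀ lam u x) ^ 2 := by
  have hV2 : ContDiff ℝ 2 (conjV x₀ lam u) := contDiff_conjV x₀ lam hu
  have hcross : (∑ j, (x j - x₀ j) * (∑ k, pd k (conjV x₀ lam u) x * pd j (pd k (conjV x₀ lam u)) x))
      = ∑ j, pd j (conjV x₀ lam u) x * (∑ k, (x k - x₀ k) * pd j (pd k (conjV x₀ lam u)) x) := by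
    have l1 : (∑ j, (x j - x₀ j) * (∑ k, pd k (conjV x₀ lam u) x * pd j (pd k (conjV x₀ lam u)) x))
        = ∑ j, ∑ k, (x j - x₀ j) * (pd k (conjV x₀ lam u) x * pd j (pd k (conjV x₀ lam u)) x) :=
      Finset.sum_congr rfl fun j _ => Finset.mul_sum _ _ _
    have l2 : (∑ j : Fin n, pd j (conjV x₀ lam u) x * (∑ k, (x k - x₀ k) * pd j (pd k (conjV x₀ lam u)) x))
        = ∑ j, ∑ k, (x k - x₀ k) * (pd j (conjV x₀ lam u) x * pd j (pd k (conjV x₀ lam u)) x) := by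
      refine Finset.sum_congr rfl fun j _ => ?_
      rw [Finset.mul_sum]
      exact Finset.sum_congr rfl fun k _ => by ring
    rw [l1, l2, Finset.sum_comm]
    refine Finset.sum_congr rfl fun k _ => Finset.sum_congr rfl fun j _ => ?_
    rw [pd_pd_symm hV2 k j x]
  rw [Finset.sum_congr rfl fun j _ => pd_ellF x₀ lam hu j x]
  simp only [Finset.sum_add_distrib, Finset.sum_sub_distrib, ← Finset.mul_sum,
    Finset.sum_const, Finset.card_univ, Fintype.card_fin, nsmul_eq_mul]
  rw [hcross]
  ring

end Div


/-- exact pointwise form of the elliptic Carleman estimate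
underlying Lemma 2.5 of the paper, i.e. Proposition 2.3 specialized to
`a^{jk} = δ^{jk}`, `ℓ = λφ` with `φ(x) = ½|x−x₀|²`, and `ℓ̃ = 0`. -/
theorem elliptic_pointwise_carleman {n : ℕ} (hn : 1 ≤ n)
    (x₀ : Fin n → ℝ) (lam : ℝ) (u : (Fin n → ℝ) → ℝ) (hu : ContDiff ℝ 2 u) :
    (∀ x : Fin n → ℝ,
      Real.exp (2 * lam * phi x₀ x) * (∑ j, pd j (pd j u) x) ^ 2 ≥
        4 * lam * (∑ j, (pd j (conjV x₀ lam u) x) ^ 2)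
          + 4 * lam ^ 3 * (∑ j, (x j - x₀ j) ^ 2) * (conjV x₀ lam u x) ^ 2
          - 2 * lam ^ 2 * (n : ℝ) ^ 2 * (conjV x₀ lam u x) ^ 2
          + ∑ j, pd j (ellF x₀ lam u j) x)
    ∧ ((n : ℝ) ^ 2 ≤ lam →
        ∀ x : Fin n → ℝ, 1 ≤ Real.sqrt (∑ j, (x j - x₀ j) ^ 2) →
          Real.exp (2 * lam * phi x₀ x) * (∑ j, pd j (pd j u) x) ^ 2 ≥
            4 * lam * (∑ j, (pd j (conjV x₀ lam u) x) ^ 2)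
              + 2 * lam ^ 3 * (conjV x₀ lam u x) ^ 2
              + ∑ j, pd j (ellF x₀ lam u j) x) := by
  have main : ∀ x : Fin n → ℝ,
      Real.exp (2 * lam * phi x₀ x) * (∑ j, pd j (pd j u) x) ^ 2 ≥
        4 * lam * (∑ j, (pd j (conjV x₀ lam u) x) ^ 2)
          + 4 * lam ^ 3 * (∑ j, (x j - x₀ j) ^ 2) * (conjV x₀ lam u x) ^ 2
          - 2 * lam ^ 2 * (n : ℝ) ^ 2 * (conjV x₀ lam u x) ^ 2
          + ∑ j, pd j (ellF x₀ lam u j) x := by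
    intro x
    have hE2 : Real.exp (2 * lam * phi x₀ x) = Real.exp (lam * phi x₀ x) ^ 2 := by
      rw [sq, ← Real.exp_add]; congr 1; ring
    have h1 := lap_conjV x₀ lam hu x
    have h2 := sum_pd_ellF x₀ lam hu x
    set D := ∑ j, pd j (pd j (conjV x₀ lam u)) x with hD
    set S := ∑ k, (x k - x₀ k) * pd k (conjV x₀ lam u) x with hS
    set R := ∑ k, (x k - x₀ k) ^ 2 with hR
    set G := ∑ k, (pd k (conjV x₀ lam u) x) ^ 2 with hG
    set Vx := conjV x₀ lam u x with hVx
    have hLHS : Real.exp (2 * lam * phi x₀ x) * (∑ j, pd j (pd j u) x) ^ 2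
        = (D - 2 * lam * S + (lam ^ 2 * R - lam * (n : ℝ)) * Vx) ^ 2 := by
      rw [hE2, ← mul_pow, h1]
    rw [hLHS, h2]
    have key : (D - 2 * lam * S + (lam ^ 2 * R - lam * (n : ℝ)) * Vx) ^ 2
        - (4 * lam * G + 4 * lam ^ 3 * R * Vx ^ 2 - 2 * lam ^ 2 * (n : ℝ) ^ 2 * Vx ^ 2
          + (- 4 * lam * G - 4 * lam * S * D - 2 * lam * (n : ℝ) * Vx * D
            - 2 * lam ^ 3 * ((n : ℝ) + 2) * R * Vx ^ 2 - 4 * lam ^ 3 * R * Vx * S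
            + 4 * lam ^ 2 * (n : ℝ) * Vx * S + 2 * lam ^ 2 * (n : ℝ) ^ 2 * Vx ^ 2))
        = (D + lam ^ 2 * R * Vx) ^ 2 + (2 * lam * S) ^ 2 + (lam * (n : ℝ) * Vx) ^ 2 := by
      ring
    nlinarith [sq_nonneg (D + lam ^ 2 * R * Vx), sq_nonneg (2 * lam * S),
      sq_nonneg (lam * (n : ℝ) * Vx), key]
  refine ⟨main, fun hlam x hx => ?_⟩
  have h1 := main x
  set R := ∑ k, (x k - x₀ k) ^ 2 with hR
  have hR0 : 0 ≤ R := Finset.sum_nonneg fun k _ => sq_nonneg _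
  have hR1 : 1 ≤ R := by
    nlinarith [Real.mul_self_sqrt hR0, Real.sqrt_nonneg R, hx]
  have hn1 : (1 : ℝ) ≤ (n : ℝ) := by exact_mod_cast hn
  have hlam1 : (1 : ℝ) ≤ lam := by nlinarith
  have hlam0 : (0 : ℝ) ≤ lam := by linarith
  set Vx := conjV x₀ lam u x with hVx
  have key2 : 2 * lam ^ 3 * Vx ^ 2
      ≤ 4 * lam ^ 3 * R * Vx ^ 2 - 2 * lam ^ 2 * (n : ℝ) ^ 2 * Vx ^ 2 := by
    nlinarith [mul_nonneg (mul_nonneg (pow_nonneg hlam0 3) (sub_nonneg.2 hR1)) (sq_nonneg Vx),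
      mul_nonneg (mul_nonneg (pow_nonneg hlam0 2) (sub_nonneg.2 hlam)) (sq_nonneg Vx)]
  linarith
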